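/- For every natural number M and every real number x, ((1−x)/2)^M = (1/(M+1)) · Σ_{l=0}^{M} (2l+1) · ((−1)^l · M!·(M+1)!/((M−l)!·(M+l+1)!)) · P_l(x). -/

import Mathlib

open Polynomial Finset


/-- The Legendre polynomial of degree `l`, via Rodrigues' formula
`P_l(x) = (1/(2^l·l!)) · dˡ/dxˡ (x²−1)ˡ`. -/
noncomputable def legendreP (l : ℕ) (x : ℝ) : ℝ :=
  (1 / (2 ^ l * l.factorial)) * iteratedDeriv l (fun y : ℝ => (y ^ 2 - 1) ^ l) x

lemma iteratedDeriv_polyeval (n : ℕ) (p : ℝ[X]) :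
    iteratedDeriv n (fun y : ℝ => p.eval y) = fun y => (derivative^[n] p).eval y := by
  induction n with
  | zero => simp
  | succ n ih =>
    rw [iteratedDeriv_succ, ih]
    funext y
    rw [Function.iterate_succ_apply']
    exact Polynomial.deriv (p := derivative^[n] p)

lemma iter_deriv_linear_pow (a : ℝ) (n j : ℕ) :
    derivative^[j] ((X + C a) ^ n) = C ((n.descFactorial j : ℕ) : ℝ) * (X + C a) ^ (n - j) := by
  induction j with
  | zero => simp
  | succ j ih =>
    rw [Function.iterate_succ_apply', ih, derivative_mul, derivative_C, zero_mul, zero_add,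
      derivative_pow, derivative_add, derivative_X, derivative_C, add_zero, mul_one,
      Nat.descFactorial_succ, Nat.cast_mul, C_mul, Nat.sub_sub]
    ring

lemma legendreP_eq (l : ℕ) (x : ℝ) :
    legendreP l x
      = ∑ i ∈ range (l + 1), (l.choose i : ℝ) ^ 2 * ((x - 1) / 2) ^ i * ((x + 1) / 2) ^ (l - i) := by
  have hfun : (fun y : ℝ => (y ^ 2 - 1) ^ l)
      = fun y => (((X + C (-1 : ℝ)) ^ l * (X + C 1) ^ l)).eval y := by
    funext y
    simp only [eval_mul, eval_pow, eval_add, eval_X, eval_C, ← mul_pow]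
    congr 1; ring
  rw [legendreP, hfun, iteratedDeriv_polyeval, iterate_derivative_mul]
  simp only [eval_finset_sum, eval_smul, iter_deriv_linear_pow, eval_mul, eval_pow, eval_add,
    eval_X, eval_C, smul_eq_mul, Finset.mul_sum]
  refine Finset.sum_congr rfl fun i hi => ?_
  rw [Finset.mem_range] at hi
  have hil : i ≤ l := Nat.lt_succ_iff.mp hi
  rw [Nat.sub_sub_self hil]
  have key : (l.choose i) * (l.descFactorial (l - i)) * (l.descFactorial i)
      = (l.choose i) ^ 2 * l.factorial := by
    rw [Nat.descFactorial_eq_factorial_mul_choose, Nat.descFactorial_eq_factorial_mul_choose,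
      Nat.choose_symm hil]
    calc l.choose i * ((l - i).factorial * l.choose i) * (i.factorial * l.choose i)
        = (l.choose i) ^ 2 * (l.choose i * i.factorial * (l - i).factorial) := by ring
      _ = (l.choose i) ^ 2 * l.factorial := by rw [Nat.choose_mul_factorial_mul_factorial hil]
  have keyR : (l.choose i : ℝ) * (l.descFactorial (l - i) : ℝ) * (l.descFactorial i : ℝ)
      = (l.choose i : ℝ) ^ 2 * (l.factorial : ℝ) := by exact_mod_cast key
  have h2 : (2 : ℝ) ^ l = 2 ^ i * 2 ^ (l - i) := by
    rw [← pow_add, Nat.add_sub_cancel' hil]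
  have hfac : (l.factorial : ℝ) ≠ 0 := by positivity
  have hx : x + -1 = x - 1 := by ring
  rw [hx, div_pow, div_pow, h2]
  field_simp
  linear_combination ((x - 1) ^ i * (x + 1) ^ (l - i)) * keyR


lemma choose_sq_sum (l k : ℕ) (hkl : k ≤ l) :
    ∑ i ∈ range (k + 1), l.choose i * l.choose i * ((l - i).choose (k - i))
      = l.choose k * (l + k).choose k := by
  have h1 : ∀ i ∈ range (k + 1),
      l.choose i * l.choose i * ((l - i).choose (k - i))
        = l.choose k * (k.choose i * l.choose i) := by
    intro i hi
    have hik : i ≤ k := Nat.lt_succ_iff.mp (mem_range.mp hi)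
    have h := Nat.choose_mul (n := l) hik
    calc l.choose i * l.choose i * ((l - i).choose (k - i))
        = (l.choose i * (l - i).choose (k - i)) * l.choose i := by ring
      _ = (l.choose k * k.choose i) * l.choose i := by rw [← h]
      _ = l.choose k * (k.choose i * l.choose i) := by ring
  rw [Finset.sum_congr rfl h1, ← Finset.mul_sum]
  congr 1
  rw [Nat.add_choose_eq, Finset.Nat.sum_antidiagonal_eq_sum_range_succ
    (fun a b => l.choose a * k.choose b) k]
  refine Finset.sum_congr rfl fun i hi => ?_
  rw [Nat.choose_symm (Nat.lt_succ_iff.mp (mem_range.mp hi)), mul_comm]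

lemma shifted_legendre_sum (l : ℕ) (u : ℝ) :
    ∑ i ∈ range (l + 1), (l.choose i : ℝ) ^ 2 * (-u) ^ i * (1 - u) ^ (l - i)
      = ∑ k ∈ range (l + 1), (-1 : ℝ) ^ k * (l.choose k) * ((l + k).choose k) * u ^ k := by
  have hb : ∀ n : ℕ, (1 - u) ^ n = ∑ j ∈ range (n + 1), ((n.choose j : ℝ)) * (-u) ^ j := by
    intro n
    rw [sub_eq_add_neg, add_comm, add_pow]
    exact Finset.sum_congr rfl fun j _ => by rw [one_pow]; ring
  calc ∑ i ∈ range (l + 1), (l.choose i : ℝ) ^ 2 * (-u) ^ i * (1 - u) ^ (l - i)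
      = ∑ i ∈ range (l + 1), ∑ k ∈ Ico i (l + 1),
          (l.choose i : ℝ) ^ 2 * (((l - i).choose (k - i) : ℝ)) * (-u) ^ k := by
        refine Finset.sum_congr rfl fun i hi => ?_
        have hil : i ≤ l := Nat.lt_succ_iff.mp (mem_range.mp hi)
        rw [hb, Finset.mul_sum, Finset.sum_Ico_eq_sum_range]
        have hn : l + 1 - i = l - i + 1 := by omega
        rw [hn]
        refine Finset.sum_congr rfl fun j _ => ?_
        rw [Nat.add_sub_cancel_left, pow_add]
        ring
    _ = ∑ i ∈ range (l + 1), ∑ k ∈ range (l + 1),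
          if i ≤ k then (l.choose i : ℝ) ^ 2 * (((l - i).choose (k - i) : ℝ)) * (-u) ^ k else 0 := by
        refine Finset.sum_congr rfl fun i hi => ?_
        rw [← Finset.sum_filter]
        congr 1
        ext m
        simp only [mem_filter, mem_range, mem_Ico]
        omega
    _ = ∑ k ∈ range (l + 1), ∑ i ∈ range (l + 1),
          if i ≤ k then (l.choose i : ℝ) ^ 2 * (((l - i).choose (k - i) : ℝ)) * (-u) ^ k else 0 :=
        Finset.sum_comm
    _ = ∑ k ∈ range (l + 1), (-1 : ℝ) ^ k * (l.choose k) * ((l + k).choose k) * u ^ k := by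
        refine Finset.sum_congr rfl fun k hk => ?_
        have hkl : k ≤ l := Nat.lt_succ_iff.mp (mem_range.mp hk)
        rw [← Finset.sum_filter]
        have hset : (range (l + 1)).filter (fun i => i ≤ k) = range (k + 1) := by
          ext m
          simp only [mem_filter, mem_range]
          omega
        rw [hset, ← Finset.sum_mul]
        have hcast : ∑ i ∈ range (k + 1), (l.choose i : ℝ) ^ 2 * (((l - i).choose (k - i) : ℝ))
            = (l.choose k : ℝ) * ((l + k).choose k : ℝ) := by
          have := choose_sq_sum l k hkl
          have h2 : ((∑ i ∈ range (k + 1),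
              l.choose i * l.choose i * ((l - i).choose (k - i)) : ℕ) : ℝ)
              = ((l.choose k * (l + k).choose k : ℕ) : ℝ) := by exact congrArg (Nat.cast : ℕ → ℝ) this
          push_cast at h2
          rw [← h2]
          exact Finset.sum_congr rfl fun i _ => by ring
        rw [hcast, neg_pow]
        ring


lemma telescope_sum (M k : ℕ) (hkM : k < M) :
    ∑ l ∈ Ico k (M + 1),
      (-1 : ℝ) ^ l * (2 * l + 1) * ((l + k).factorial)
        / ((l - k).factorial * (M - l).factorial * (M + l + 1).factorial) = 0 := by
  set G : ℕ → ℝ := fun l => if k < l ∧ l ≤ M then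
      (-1 : ℝ) ^ (l + 1) * ((l + k).factorial)
        / (((M - k : ℕ) : ℝ) * ((l - 1 - k).factorial) * ((M - l).factorial)
            * ((M + l).factorial)) else 0 with hG
  have key : ∀ l, k ≤ l → l ≤ M →
      (-1 : ℝ) ^ l * (2 * l + 1) * ((l + k).factorial)
        / ((l - k).factorial * (M - l).factorial * (M + l + 1).factorial)
        = G (l + 1) - G l := by
    intro l hkl hlM
    rcases Nat.eq_or_lt_of_le hkl with rfl | hkl'
    · -- l = k
      obtain ⟨b, rfl⟩ : ∃ b, M = k + 1 + b := ⟨M - k - 1, by omega⟩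
      rw [hG]
      simp only [if_pos (by omega : k < k + 1 ∧ k + 1 ≤ k + 1 + b),
        if_neg (by omega : ¬(k < k ∧ k ≤ k + 1 + b))]
      rw [show k - k = 0 from by omega, show k + 1 - 1 - k = 0 from by omega,
        show k + 1 + b - k = b + 1 from by omega, show k + 1 + b - (k + 1) = b from by omega,
        show k + 1 + b + k + 1 = (k + 1 + b + k) + 1 from by omega,
        show k + 1 + b + (k + 1) = (k + 1 + b + k) + 1 from by omega,
        show k + 1 + k = (k + k) + 1 from by omega]
      simp only [Nat.factorial_succ, Nat.factorial_zero, pow_succ]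
      push_cast
      have h1 : ((b : ℝ) + 1) ≠ 0 := by positivity
      have h2 : ((b.factorial : ℝ)) ≠ 0 := by positivity
      have h3 : (((k + 1 + b + k).factorial : ℝ)) ≠ 0 := by positivity
      have h4 : (((k + k).factorial : ℝ)) ≠ 0 := by positivity
      have h5 : ((k : ℝ) + 1 + b + k + 1) ≠ 0 := by positivity
      field_simp
      ring
    · -- k < l
      rcases Nat.eq_or_lt_of_le hlM with heq | hlM'
      · -- l = M
        obtain ⟨a, rfl⟩ : ∃ a, l = k + 1 + a := ⟨l - k - 1, by omega⟩
        obtain rfl : M = k + 1 + a := heq.symm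
        rw [hG]
        simp only [if_neg (by omega : ¬(k < k + 1 + a + 1 ∧ k + 1 + a + 1 ≤ k + 1 + a)),
          if_pos (by omega : k < k + 1 + a ∧ k + 1 + a ≤ k + 1 + a)]
        rw [show k + 1 + a - k = a + 1 from by omega,
          show k + 1 + a - 1 - k = a from by omega,
          show k + 1 + a - (k + 1 + a) = 0 from by omega]
        simp only [Nat.factorial_succ, Nat.factorial_zero, pow_succ]
        push_cast
        have h1 : ((a : ℝ) + 1) ≠ 0 := by positivity
        have h2 : ((a.factorial : ℝ)) ≠ 0 := by positivity
        have h3 : (((k + 1 + a + k).factorial : ℝ)) ≠ 0 := by positivity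
        have h4 : (((k + 1 + a + (k + 1 + a)).factorial : ℝ)) ≠ 0 := by positivity
        have h5 : ((k : ℝ) + 1 + a + (k + 1 + a) + 1) ≠ 0 := by positivity
        field_simp
        ring
      · -- k < l < M
        obtain ⟨a, rfl⟩ : ∃ a, l = k + 1 + a := ⟨l - k - 1, by omega⟩
        obtain ⟨b, rfl⟩ : ∃ b, M = (k + 1 + a) + 1 + b := ⟨M - (k + 1 + a) - 1, by omega⟩
        rw [hG]
        simp only [if_pos (by omega : k < k + 1 + a + 1 ∧ k + 1 + a + 1 ≤ k + 1 + a + 1 + b),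
          if_pos (by omega : k < k + 1 + a ∧ k + 1 + a ≤ k + 1 + a + 1 + b)]
        rw [show k + 1 + a - k = a + 1 from by omega,
          show k + 1 + a - 1 - k = a from by omega,
          show k + 1 + a + 1 - 1 - k = a + 1 from by omega,
          show k + 1 + a + 1 + b - (k + 1 + a) = b + 1 from by omega,
          show k + 1 + a + 1 + b - (k + 1 + a + 1) = b from by omega,
          show k + 1 + a + 1 + b - k = (a + b + 1) + 1 from by omega,
          show k + 1 + a + 1 + k = ((k + a) + (k + 1)) + 1 from by omega,
          show k + 1 + a + k = (k + a) + (k + 1) from by omega,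
          show k + 1 + a + 1 + b + (k + 1 + a) + 1
            = ((((k + a) + (k + 1)) + (a + b + 1)) + 1) + 1 from by omega,
          show k + 1 + a + 1 + b + (k + 1 + a + 1)
            = ((((k + a) + (k + 1)) + (a + b + 1)) + 1) + 1 from by omega,
          show k + 1 + a + 1 + b + (k + 1 + a)
            = (((k + a) + (k + 1)) + (a + b + 1)) + 1 from by omega]
        simp only [Nat.factorial_succ, pow_succ]
        push_cast
        have h1 : ((a : ℝ) + 1) ≠ 0 := by positivity
        have h2 : ((a.factorial : ℝ)) ≠ 0 := by positivity
        have h3 : ((b : ℝ) + 1) ≠ 0 := by positivity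
        have h4 : ((b.factorial : ℝ)) ≠ 0 := by positivity
        have h5 : (((k + a + (k + 1)).factorial : ℝ)) ≠ 0 := by positivity
        have h6 : (((k + a + (k + 1) + (a + b + 1)).factorial : ℝ)) ≠ 0 := by positivity
        have h7 : ((a : ℝ) + b + 1 + 1) ≠ 0 := by positivity
        have h8 : ((k : ℝ) + a + (k + 1) + (a + b + 1) + 1) ≠ 0 := by positivity
        have h9 : ((k : ℝ) + a + (k + 1) + (a + b + 1) + 1 + 1) ≠ 0 := by positivity
        field_simp
        ring
  calc ∑ l ∈ Ico k (M + 1),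
        (-1 : ℝ) ^ l * (2 * l + 1) * ((l + k).factorial)
          / ((l - k).factorial * (M - l).factorial * (M + l + 1).factorial)
      = ∑ l ∈ Ico k (M + 1), (G (l + 1) - G l) := by
        refine Finset.sum_congr rfl fun l hl => ?_
        rw [mem_Ico] at hl
        exact key l hl.1 (Nat.lt_succ_iff.mp hl.2)
    _ = ∑ i ∈ range (M + 1 - k), (G (k + (i + 1)) - G (k + i)) := by
        rw [Finset.sum_Ico_eq_sum_range]
        exact Finset.sum_congr rfl fun i _ => by rw [show k + i + 1 = k + (i + 1) from rfl]
    _ = G (k + (M + 1 - k)) - G (k + 0) := Finset.sum_range_sub (fun i => G (k + i)) _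
    _ = 0 := by
        rw [show k + (M + 1 - k) = M + 1 from by omega, hG]
        simp only [Nat.add_zero]
        rw [if_neg (show ¬(k < M + 1 ∧ M + 1 ≤ M) by omega),
          if_neg (show ¬(k < k ∧ k ≤ M) by omega)]
        ring

lemma coeff_sum (M k : ℕ) (hk : k ≤ M) :
    ∑ l ∈ range (M + 1),
      (if k ≤ l then
        (2 * (l : ℝ) + 1) *
          ((-1 : ℝ) ^ l * M.factorial * (M + 1).factorial /
            ((M - l).factorial * (M + l + 1).factorial)) *
          ((-1 : ℝ) ^ k * (l.choose k) * ((l + k).choose k)) else 0)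
      = if k = M then ((M : ℝ) + 1) else 0 := by
  rcases Nat.eq_or_lt_of_le hk with rfl | hkM
  · rw [if_pos rfl, Finset.sum_range_succ,
      Finset.sum_congr rfl (fun l hl => if_neg (by rw [mem_range] at hl; omega)),
      Finset.sum_const_zero, zero_add, if_pos le_rfl]
    rw [Nat.sub_self, Nat.factorial_zero, Nat.choose_self]
    have h2 : (k + k).choose k * k.factorial * k.factorial = (k + k).factorial := by
      have := Nat.choose_mul_factorial_mul_factorial (show k ≤ k + k by omega)
      rwa [Nat.add_sub_cancel] at this
    have n1 : ((k.factorial : ℝ)) ≠ 0 := by positivity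
    have hC : (((k + k).choose k : ℕ) : ℝ)
        = ((k + k).factorial : ℝ) / ((k.factorial : ℝ) * (k.factorial : ℝ)) := by
      have h2R : ((k + k).choose k : ℝ) * k.factorial * k.factorial
          = ((k + k).factorial : ℝ) := by exact_mod_cast congrArg (Nat.cast : ℕ → ℝ) h2
      field_simp
      linear_combination h2R
    have hsq : ((-1 : ℝ)) ^ k * ((-1 : ℝ)) ^ k = 1 := by
      rw [← mul_pow]; norm_num
    have e1 : (((k + k + 1).factorial : ℕ) : ℝ)
        = ((k : ℝ) + k + 1) * ((k + k).factorial : ℝ) := by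
      rw [show k + k + 1 = (k + k) + 1 from rfl, Nat.factorial_succ]; push_cast; ring
    have e2 : (((k + 1).factorial : ℕ) : ℝ) = ((k : ℝ) + 1) * (k.factorial : ℝ) := by
      rw [Nat.factorial_succ]; push_cast; ring
    have n2 : (((k + k).factorial : ℝ)) ≠ 0 := by positivity
    have n3 : ((k : ℝ) + k + 1) ≠ 0 := by positivity
    rw [hC, e1, e2]
    field_simp
    linear_combination ((k:ℝ) + k + 1) * hsq
  · rw [if_neg (by omega), ← Finset.sum_filter,
      show (range (M + 1)).filter (fun l => k ≤ l) = Ico k (M + 1) from by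
        ext m; simp only [mem_filter, mem_range, mem_Ico]; omega]
    have hper : ∀ l ∈ Ico k (M + 1),
        (2 * (l : ℝ) + 1) *
          ((-1 : ℝ) ^ l * M.factorial * (M + 1).factorial /
            ((M - l).factorial * (M + l + 1).factorial)) *
          ((-1 : ℝ) ^ k * (l.choose k) * ((l + k).choose k))
        = ((-1 : ℝ) ^ k * M.factorial * (M + 1).factorial / (k.factorial * k.factorial)) *
            ((-1 : ℝ) ^ l * (2 * l + 1) * ((l + k).factorial)
              / ((l - k).factorial * (M - l).factorial * (M + l + 1).factorial)) := by
      intro l hl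
      rw [mem_Ico] at hl
      have hkl : k ≤ l := hl.1
      have hnat : l.choose k * ((l + k).choose k) * (l - k).factorial
          * (k.factorial * k.factorial) = (l + k).factorial := by
        have h1 := Nat.choose_mul_factorial_mul_factorial hkl
        have h2 := Nat.choose_mul_factorial_mul_factorial (show k ≤ l + k by omega)
        rw [Nat.add_sub_cancel] at h2
        calc l.choose k * ((l + k).choose k) * (l - k).factorial * (k.factorial * k.factorial)
            = (l + k).choose k * k.factorial * (l.choose k * k.factorial * (l - k).factorial) := by
              ring
          _ = (l + k).choose k * k.factorial * l.factorial := by rw [h1]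
          _ = (l + k).factorial := h2
      have hnatR : (l.choose k : ℝ) * ((l + k).choose k : ℝ) * ((l - k).factorial : ℝ)
          * ((k.factorial : ℝ) * (k.factorial : ℝ)) = ((l + k).factorial : ℝ) := by
        exact_mod_cast congrArg (Nat.cast : ℕ → ℝ) hnat
      have n1 : ((k.factorial : ℝ)) ≠ 0 := by positivity
      have n2 : (((l - k).factorial : ℝ)) ≠ 0 := by positivity
      have n3 : (((M - l).factorial : ℝ)) ≠ 0 := by positivity
      have n4 : (((M + l + 1).factorial : ℝ)) ≠ 0 := by positivity
      field_simp
      linear_combination hnatR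
    rw [Finset.sum_congr rfl hper, ← Finset.mul_sum, telescope_sum M k hkM, mul_zero]

/-- The Legendre expansion
`((1−x)/2)^M = (1/(M+1)) Σ_{l=0}^{M} (2l+1) λ(l,M) P_l(x)` with
`λ(l,M) = (−1)^l M!(M+1)!/((M−l)!(M+l+1)!)`. -/
theorem legendre_expansion (M : ℕ) (x : ℝ) :
    ((1 - x) / 2) ^ M
      = (1 / (M + 1)) * ∑ l ∈ Finset.range (M + 1),
          (2 * l + 1) *
            ((-1 : ℝ) ^ l * M.factorial * (M + 1).factorial /
              ((M - l).factorial * (M + l + 1).factorial)) *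
            legendreP l x := by
  have hleg : ∀ l, legendreP l x
      = ∑ k ∈ range (l + 1),
          (-1 : ℝ) ^ k * (l.choose k) * ((l + k).choose k) * ((1 - x) / 2) ^ k := by
    intro l
    rw [legendreP_eq, ← shifted_legendre_sum l ((1 - x) / 2)]
    refine Finset.sum_congr rfl fun i _ => ?_
    rw [show -((1 - x) / 2) = (x - 1) / 2 from by ring,
      show (1 : ℝ) - (1 - x) / 2 = (x + 1) / 2 from by ring]
  have hM1 : ((M : ℝ) + 1) ≠ 0 := by positivity
  symm
  calc (1 / ((M : ℝ) + 1)) * ∑ l ∈ Finset.range (M + 1),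
          (2 * l + 1) *
            ((-1 : ℝ) ^ l * M.factorial * (M + 1).factorial /
              ((M - l).factorial * (M + l + 1).factorial)) *
            legendreP l x
      = (1 / ((M : ℝ) + 1)) * ∑ l ∈ range (M + 1), ∑ k ∈ range (M + 1),
          (if k ≤ l then
            (2 * (l : ℝ) + 1) *
              ((-1 : ℝ) ^ l * M.factorial * (M + 1).factorial /
                ((M - l).factorial * (M + l + 1).factorial)) *
              ((-1 : ℝ) ^ k * (l.choose k) * ((l + k).choose k)) * ((1 - x) / 2) ^ k
            else 0) := by
        congr 1
        refine Finset.sum_congr rfl fun l hl => ?_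
        have hlM : l ≤ M := Nat.lt_succ_iff.mp (mem_range.mp hl)
        rw [hleg l, Finset.mul_sum,
          show range (l + 1) = (range (M + 1)).filter (fun k => k ≤ l) from by
            ext m
            simp only [mem_range, mem_filter]
            omega,
          Finset.sum_filter]
        refine Finset.sum_congr rfl fun k hk => ?_
        split_ifs with h
        · ring
        · rfl
    _ = (1 / ((M : ℝ) + 1)) * ∑ k ∈ range (M + 1),
          (∑ l ∈ range (M + 1),
            (if k ≤ l then
              (2 * (l : ℝ) + 1) *
                ((-1 : ℝ) ^ l * M.factorial * (M + 1).factorial /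
                  ((M - l).factorial * (M + l + 1).factorial)) *
                ((-1 : ℝ) ^ k * (l.choose k) * ((l + k).choose k))
              else 0)) * ((1 - x) / 2) ^ k := by
        rw [Finset.sum_comm]
        congr 1
        refine Finset.sum_congr rfl fun k hk => ?_
        rw [Finset.sum_mul]
        refine Finset.sum_congr rfl fun l hl => ?_
        split_ifs with h
        · ring
        · rw [zero_mul]
    _ = (1 / ((M : ℝ) + 1)) * ∑ k ∈ range (M + 1),
          (if k = M then ((M : ℝ) + 1) else 0) * ((1 - x) / 2) ^ k := by
        congr 1
        refine Finset.sum_congr rfl fun k hk => ?_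
        rw [coeff_sum M k (Nat.lt_succ_iff.mp (mem_range.mp hk))]
    _ = ((1 - x) / 2) ^ M := by
        rw [Finset.sum_congr rfl (fun k _ => by rw [ite_mul, zero_mul]),
          Finset.sum_ite_eq' (range (M + 1)) M (fun k => ((M : ℝ) + 1) * ((1 - x) / 2) ^ k),
          if_pos (mem_range.mpr (Nat.lt_succ_self M))]
        field_simp
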